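/- For every real number q with 1/2 < q < 1, every odd positive integer K, and every real μ with 0 < μ < 1: μ (1-q) G_K(q) ≤ (1-μ) q B_K(q) if and only if μ ≤ q²(1 - T_K(q)) / (q²(1 - T_K(q)) + (1-q)² T_K(q)), where G_K(q) := ∑_{y=(K+1)/2}^{K} (1/y) C(K-1,y-1) q^{y-1} (1-q)^{K-y}, B_K(q) := ∑_{y=(K+1)/2}^{K} (1/y) C(K-1,y-1) q^{K-y} (1-q)^{y-1}, and T_K(q) := ∑_{y=(K+1)/2}^{K} C(K,y) q^y (1-q)^{K-y}. -/

import Mathlib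

open Finset

/-- Probability that a fixed opting-in agent receives the object, conditional on good quality. -/
noncomputable def allocG (q : ℝ) (K : ℕ) : ℝ :=
  ∑ y ∈ Finset.Icc ((K + 1) / 2) K,
    (1 / (y : ℝ)) * ((K - 1).choose (y - 1) : ℝ) * q ^ (y - 1) * (1 - q) ^ (K - y)

/-- Probability that a fixed opting-in agent receives the object, conditional on bad quality. -/
noncomputable def allocB (q : ℝ) (K : ℕ) : ℝ :=
  ∑ y ∈ Finset.Icc ((K + 1) / 2) K,
    (1 / (y : ℝ)) * ((K - 1).choose (y - 1) : ℝ) * q ^ (K - y) * (1 - q) ^ (y - 1)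

/-- Tail of a Binomial(K,q): probability of at least (K+1)/2 successes. -/
noncomputable def binTail (q : ℝ) (K : ℕ) : ℝ :=
  ∑ y ∈ Finset.Icc ((K + 1) / 2) K, (K.choose y : ℝ) * q ^ y * (1 - q) ^ (K - y)

/-- The incentive-compatibility constraint for an agent with a negative signal holds
iff the prior is at most q²(1-T_K)/(q²(1-T_K) + (1-q)²T_K). -/
theorem ic_bad_signal_iff (q : ℝ) (hq : 1 / 2 < q) (hq1 : q < 1)
    (K : ℕ) (hK : Odd K) (hKpos : 0 < K) (μ : ℝ) (hμ0 : 0 < μ) (hμ1 : μ < 1) :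
    μ * (1 - q) * allocG q K ≤ (1 - μ) * q * allocB q K ↔
      μ ≤ q ^ 2 * (1 - binTail q K) /
        (q ^ 2 * (1 - binTail q K) + (1 - q) ^ 2 * binTail q K) := by
  have hq0 : 0 < q := by linarith
  have hq1' : 0 < 1 - q := by linarith
  obtain ⟨k, hk⟩ := hK
  have hm1 : 1 ≤ (K + 1) / 2 := by omega
  have hmK : (K + 1) / 2 ≤ K := by omega
  -- choose identity
  have hchoose : ∀ y : ℕ, (K + 1) / 2 ≤ y → y ≤ K →
      (K : ℝ) * ((K - 1).choose (y - 1) : ℝ) = (y : ℝ) * (K.choose y : ℝ) := by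
    intro y hy1 hy2
    have h1 : 1 ≤ y := le_trans hm1 hy1
    have hnat : K * (K - 1).choose (y - 1) = y * K.choose y := by
      have h := Nat.add_one_mul_choose_eq (K - 1) (y - 1)
      have e1 : K - 1 + 1 = K := by omega
      have e2 : y - 1 + 1 = y := by omega
      rw [e1, e2] at h
      rw [h, Nat.mul_comm]
    exact_mod_cast hnat
  -- K q * allocG = binTail
  have hG : (K : ℝ) * q * allocG q K = binTail q K := by
    unfold allocG binTail
    rw [Finset.mul_sum]
    refine Finset.sum_congr rfl ?_
    intro y hy
    simp only [Finset.mem_Icc] at hy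
    have h1 : 1 ≤ y := le_trans hm1 hy.1
    have hy0 : (y : ℝ) ≠ 0 := Nat.cast_ne_zero.mpr (by omega)
    have hqy : q ^ y = q * q ^ (y - 1) := by
      conv_lhs => rw [show y = (y - 1) + 1 by omega, pow_succ]
      ring
    have hc := hchoose y hy.1 hy.2
    rw [hqy]
    have hc' : (1 / (y : ℝ)) * ((K : ℝ) * ((K - 1).choose (y - 1) : ℝ)) = (K.choose y : ℝ) := by
      rw [hc, ← mul_assoc, one_div, inv_mul_cancel₀ hy0, one_mul]
    linear_combination q * q ^ (y - 1) * (1 - q) ^ (K - y) * hc'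
  -- K(1-q) * allocB = lower sum
  have hB1 : (K : ℝ) * (1 - q) * allocB q K =
      ∑ y ∈ Finset.Icc ((K + 1) / 2) K, (K.choose y : ℝ) * q ^ (K - y) * (1 - q) ^ y := by
    unfold allocB
    rw [Finset.mul_sum]
    refine Finset.sum_congr rfl ?_
    intro y hy
    simp only [Finset.mem_Icc] at hy
    have h1 : 1 ≤ y := le_trans hm1 hy.1
    have hy0 : (y : ℝ) ≠ 0 := Nat.cast_ne_zero.mpr (by omega)
    have hqy : (1 - q) ^ y = (1 - q) * (1 - q) ^ (y - 1) := by
      conv_lhs => rw [show y = (y - 1) + 1 by omega, pow_succ]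
      ring
    have hc := hchoose y hy.1 hy.2
    rw [hqy]
    have hc' : (1 / (y : ℝ)) * ((K : ℝ) * ((K - 1).choose (y - 1) : ℝ)) = (K.choose y : ℝ) := by
      rw [hc, ← mul_assoc, one_div, inv_mul_cancel₀ hy0, one_mul]
    linear_combination (1 - q) * q ^ (K - y) * (1 - q) ^ (y - 1) * hc'
  have hB2 : ∑ y ∈ Finset.Icc ((K + 1) / 2) K, (K.choose y : ℝ) * q ^ (K - y) * (1 - q) ^ y =
      ∑ j ∈ Finset.range ((K + 1) / 2), (K.choose j : ℝ) * q ^ j * (1 - q) ^ (K - j) := by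
    refine Finset.sum_nbij' (fun y => K - y) (fun j => K - j) ?_ ?_ ?_ ?_ ?_
    · intro a ha; simp only [Finset.mem_Icc] at ha; simp only [Finset.mem_range]; omega
    · intro a ha; simp only [Finset.mem_range] at ha; simp only [Finset.mem_Icc]; omega
    · intro a ha; simp only [Finset.mem_Icc] at ha; show K - (K - a) = a; omega
    · intro a ha; simp only [Finset.mem_range] at ha; show K - (K - a) = a; omega
    · intro a ha
      simp only [Finset.mem_Icc] at ha
      have h1 : K - (K - a) = a := by omega
      rw [Nat.choose_symm ha.2, h1]
  have hbin : ∑ j ∈ Finset.range (K + 1), (K.choose j : ℝ) * q ^ j * (1 - q) ^ (K - j) = 1 := by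
    have h2 : ((q + (1 - q)) : ℝ) ^ K
        = ∑ j ∈ Finset.range (K + 1), (K.choose j : ℝ) * q ^ j * (1 - q) ^ (K - j) := by
      rw [add_pow]
      exact Finset.sum_congr rfl fun j _ => by ring
    rw [← h2]; norm_num
  have hsum : (∑ j ∈ Finset.range ((K + 1) / 2), (K.choose j : ℝ) * q ^ j * (1 - q) ^ (K - j))
      + binTail q K = 1 := by
    unfold binTail
    rw [show Finset.Icc ((K + 1) / 2) K = Finset.Ico ((K + 1) / 2) (K + 1) from
      (Finset.Ico_add_one_right_eq_Icc _ _).symm]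
    rw [Finset.range_eq_Ico]
    rw [Finset.sum_Ico_consecutive _ (Nat.zero_le _) (show (K + 1) / 2 ≤ K + 1 by omega)]
    rw [← Finset.range_eq_Ico]
    exact hbin
  have hB : (K : ℝ) * (1 - q) * allocB q K = 1 - binTail q K := by
    rw [hB1, hB2]; linarith
  have hT0 : 0 ≤ binTail q K :=
    Finset.sum_nonneg fun y _ => by positivity
  have hBnn : 0 ≤ allocB q K :=
    Finset.sum_nonneg fun y _ => by positivity
  have hKc : (0 : ℝ) < K := Nat.cast_pos.mpr hKpos
  have hT1 : binTail q K ≤ 1 := by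
    nlinarith [mul_nonneg (mul_nonneg hKc.le hq1'.le) hBnn]
  have hD : 0 < q ^ 2 * (1 - binTail q K) + (1 - q) ^ 2 * binTail q K := by
    nlinarith [mul_nonneg (show (0:ℝ) ≤ q ^ 2 - (1 - q) ^ 2 by nlinarith)
      (show (0:ℝ) ≤ 1 - binTail q K by linarith), mul_pos hq1' hq1']
  have hc : 0 < (K : ℝ) * q * (1 - q) := by positivity
  have key : μ * (1 - q) * allocG q K ≤ (1 - μ) * q * allocB q K ↔
      μ * (1 - q) ^ 2 * binTail q K ≤ (1 - μ) * q ^ 2 * (1 - binTail q K) := by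
    rw [show μ * (1 - q) ^ 2 * binTail q K
          = μ * (1 - q) * allocG q K * ((K : ℝ) * q * (1 - q)) by rw [← hG]; ring,
        show (1 - μ) * q ^ 2 * (1 - binTail q K)
          = (1 - μ) * q * allocB q K * ((K : ℝ) * q * (1 - q)) by rw [← hB]; ring]
    exact (mul_le_mul_iff_of_pos_right hc).symm
  rw [key, le_div_iff₀ hD]
  constructor <;> intro h <;> nlinarith [h]
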